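/- As a → ∞, Y(a) = Im{(1-2ia)^{-1}F(1/2,1;5/4-ia/2;1/2)} has the asymptotic expansion Y(a) ~ Σ_{k≥0} y_{2k+1}/a^{2k+1} with y₁ = 1/2, y₃ = 1/4, y₅ = 7/8, y₇ = 139/16; in particular Y(a) = 1/(2a) + O(a^{-3}). -/

import Mathlib

open Filter Asymptotics

/-- The Gauss hypergeometric function `F(a,b;c;z)` defined by its series. -/
noncomputable def hypF (a b c z : ℂ) : ℂ :=
  ∑' n : ℕ, ((ascPochhammer ℂ n).eval a * (ascPochhammer ℂ n).eval b) /
      ((ascPochhammer ℂ n).eval c * (n.factorial : ℂ)) * z ^ n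

open Finset Complex

noncomputable def trm (a : ℝ) (n : ℕ) : ℂ :=
  ((ascPochhammer ℂ n).eval (1 / 2) * (ascPochhammer ℂ n).eval 1) /
      ((ascPochhammer ℂ n).eval (5 / 4 - Complex.I * a / 2) * (n.factorial : ℂ)) * (1 / 2 : ℂ) ^ n

noncomputable def pr (a : ℝ) : ℝ := 6548964345/65536 - 50496033/1024*a^2 + 3830297/2048*a^4 - 4961/512*a^6 + a^8/256
noncomputable def pim (a : ℝ) : ℝ := -110234817/1024*a + 50798601/4096*a^3 - 177633/1024*a^5 + 153/512*a^7
noncomputable def qr (a : ℝ) : ℝ := 4996616625/65536 - 930584097/4096*a^2 + 51152031/2048*a^4 - 88893/256*a^6 + 153/256*a^8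
noncomputable def qi (a : ℝ) : ℝ := -7990901865/32768*a + 205755149/2048*a^3 - 3840207/1024*a^5 + 2481/128*a^7 - a^9/128

noncomputable def Del (a : ℝ) : ℂ :=
  (5 / 4 - Complex.I * (a:ℂ) / 2 + 0) * (5 / 4 - Complex.I * (a:ℂ) / 2 + 1) * (5 / 4 - Complex.I * (a:ℂ) / 2 + 2) * (5 / 4 - Complex.I * (a:ℂ) / 2 + 3) * (5 / 4 - Complex.I * (a:ℂ) / 2 + 4) * (5 / 4 - Complex.I * (a:ℂ) / 2 + 5) * (5 / 4 - Complex.I * (a:ℂ) / 2 + 6) * (5 / 4 - Complex.I * (a:ℂ) / 2 + 7)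

noncomputable def SM (a : ℝ) : ℂ :=
  (1 : ℂ) * ((5 / 4 - Complex.I * (a:ℂ) / 2 + 0) * (5 / 4 - Complex.I * (a:ℂ) / 2 + 1) * (5 / 4 - Complex.I * (a:ℂ) / 2 + 2) * (5 / 4 - Complex.I * (a:ℂ) / 2 + 3) * (5 / 4 - Complex.I * (a:ℂ) / 2 + 4) * (5 / 4 - Complex.I * (a:ℂ) / 2 + 5) * (5 / 4 - Complex.I * (a:ℂ) / 2 + 6) * (5 / 4 - Complex.I * (a:ℂ) / 2 + 7)) + (1 / 4 : ℂ) * ((5 / 4 - Complex.I * (a:ℂ) / 2 + 1) * (5 / 4 - Complex.I * (a:ℂ) / 2 + 2) * (5 / 4 - Complex.I * (a:ℂ) / 2 + 3) * (5 / 4 - Complex.I * (a:ℂ) / 2 + 4) * (5 / 4 - Complex.I * (a:ℂ) / 2 + 5) * (5 / 4 - Complex.I * (a:ℂ) / 2 + 6) * (5 / 4 - Complex.I * (a:ℂ) / 2 + 7)) + (3 / 16 : ℂ) * ((5 / 4 - Complex.I * (a:ℂ) / 2 + 2) * (5 / 4 - Complex.I * (a:ℂ) / 2 + 3) * (5 /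 4 - Complex.I * (a:ℂ) / 2 + 4) * (5 / 4 - Complex.I * (a:ℂ) / 2 + 5) * (5 / 4 - Complex.I * (a:ℂ) / 2 + 6) * (5 / 4 - Complex.I * (a:ℂ) / 2 + 7)) + (15 / 64 : ℂ) * ((5 / 4 - Complex.I * (a:ℂ) / 2 + 3) * (5 / 4 - Complex.I * (a:ℂ) / 2 + 4) * (5 / 4 - Complex.I * (a:ℂ) / 2 + 5) * (5 / 4 - Complex.I * (a:ℂ) / 2 + 6) * (5 / 4 - Complex.I * (a:ℂ) / 2 + 7)) + (105 / 256 : ℂ) * ((5 / 4 - Complex.I * (a:ℂ) / 2 + 4) * (5 / 4 - Complex.I * (a:ℂ) / 2 + 5) * (5 / 4 - Complex.I * (a:ℂ) / 2 + 6) * (5 / 4 - Complex.I * (a:ℂ) / 2 + 7)) + (945 / 1024 : ℂ) * ((5 / 4 - Complex.I * (a:ℂ) / 2 + 5) * (5 / 4 - Complex.I * (a:ℂ) / 2 + 6) * (5 / 4 - Complex.I * (a:ℂ) / 2 + 7)) + (10395 / 4096 : ℂ) * ((5 / 4 - Complex.I * (a:ℂ) / 2 + 6) * (5 / 4 - Complex.I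 * (a:ℂ) / 2 + 7)) + (135135 / 16384 : ℂ) * ((5 / 4 - Complex.I * (a:ℂ) / 2 + 7)) + (2027025 / 65536 : ℂ) * (1)

set_option maxHeartbeats 1600000 in
lemma SM_eq (a : ℝ) : SM a = (pr a : ℂ) + (pim a) * Complex.I := by
  simp only [Complex.ext_iff, SM, pr, pim, Complex.add_re, Complex.add_im, Complex.mul_re,
    Complex.mul_im, Complex.sub_re, Complex.sub_im, Complex.ofReal_re, Complex.ofReal_im,
    Complex.I_re, Complex.I_im, Complex.one_re, Complex.one_im, Complex.div_ofNat_re,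
    Complex.div_ofNat_im, Complex.re_ofNat, Complex.im_ofNat, Complex.div_re, Complex.div_im,
    Complex.normSq_ofNat, Complex.one_im, Complex.zero_re, Complex.zero_im]
  norm_num
  constructor <;> ring

set_option maxHeartbeats 1600000 in
lemma Q_eq (a : ℝ) : (qr a : ℂ) + (qi a) * Complex.I = Del a * (1 - 2 * Complex.I * a) := by
  simp only [Complex.ext_iff, Del, qr, qi, Complex.add_re, Complex.add_im, Complex.mul_re,
    Complex.mul_im, Complex.sub_re, Complex.sub_im, Complex.ofReal_re, Complex.ofReal_im,
    Complex.I_re, Complex.I_im, Complex.one_re, Complex.one_im, Complex.div_ofNat_re,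
    Complex.div_ofNat_im, Complex.re_ofNat, Complex.im_ofNat, Complex.div_re, Complex.div_im,
    Complex.normSq_ofNat, Complex.zero_re, Complex.zero_im]
  norm_num
  constructor <;> ring

set_option maxHeartbeats 1600000 in
lemma sum9 (a : ℝ) (ha : 0 < a) :
    (1 - 2 * Complex.I * a)⁻¹ * (∑ n ∈ Finset.range 9, trm a n) =
      ((pr a : ℂ) + (pim a) * Complex.I) / ((qr a : ℂ) + (qi a) * Complex.I) := by
  have him : ∀ z : ℂ, z.im ≠ 0 → z ≠ 0 := fun z hz h => hz (by rw [h]; simp)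
  have h0 : ((5:ℂ) / 4 - Complex.I * a / 2 + 0) ≠ 0 := him _ (by simp [ha.ne'])
  have h1 : ((5:ℂ) / 4 - Complex.I * a / 2 + 1) ≠ 0 := him _ (by simp [ha.ne'])
  have h2 : ((5:ℂ) / 4 - Complex.I * a / 2 + 2) ≠ 0 := him _ (by simp [ha.ne'])
  have h3 : ((5:ℂ) / 4 - Complex.I * a / 2 + 3) ≠ 0 := him _ (by simp [ha.ne'])
  have h4 : ((5:ℂ) / 4 - Complex.I * a / 2 + 4) ≠ 0 := him _ (by simp [ha.ne'])
  have h5 : ((5:ℂ) / 4 - Complex.I * a / 2 + 5) ≠ 0 := him _ (by simp [ha.ne'])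
  have h6 : ((5:ℂ) / 4 - Complex.I * a / 2 + 6) ≠ 0 := him _ (by simp [ha.ne'])
  have h7 : ((5:ℂ) / 4 - Complex.I * a / 2 + 7) ≠ 0 := him _ (by simp [ha.ne'])
  have hw : (1 - 2 * Complex.I * (a:ℝ)) ≠ 0 := him _ (by simp [ha.ne'])
  have hDel : Del a ≠ 0 := by
    rw [Del]
    exact mul_ne_zero (mul_ne_zero (mul_ne_zero (mul_ne_zero (mul_ne_zero (mul_ne_zero
      (mul_ne_zero h0 h1) h2) h3) h4) h5) h6) h7
  have e0 : trm a 0 = (1 : ℂ) * ((5 / 4 - Complex.I * (a:ℂ) / 2 + 0) * (5 / 4 - Complex.I * (a:ℂ) / 2 + 1) * (5 / 4 - Complex.I * (a:ℂ) / 2 + 2) * (5 / 4 - Complex.I * (a:ℂ) / 2 + 3) * (5 / 4 - Complex.I * (a:ℂ) / 2 + 4) * (5 / 4 - Complex.I * (a:ℂ) / 2 + 5) * (5 / 4 - Complex.I * (a:ℂ) / 2 + 6) * (5 / 4 - Complex.I * (a:ℂ) / 2 + 7)) / Del a := by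
    simp only [trm, ascPochhammer_succ_eval, ascPochhammer_zero, Polynomial.eval_one,
      Nat.factorial]
    push_cast
    rw [div_mul_eq_mul_div, div_eq_div_iff (mul_ne_zero one_ne_zero (by norm_num : (1:ℂ) ≠ 0)) hDel]
    rw [Del]; ring
  have e1 : trm a 1 = (1 / 4 : ℂ) * ((5 / 4 - Complex.I * (a:ℂ) / 2 + 1) * (5 / 4 - Complex.I * (a:ℂ) / 2 + 2) * (5 / 4 - Complex.I * (a:ℂ) / 2 + 3) * (5 / 4 - Complex.I * (a:ℂ) / 2 + 4) * (5 / 4 - Complex.I * (a:ℂ) / 2 + 5) * (5 / 4 - Complex.I * (a:ℂ) / 2 + 6) * (5 / 4 - Complex.I * (a:ℂ) / 2 + 7)) / Del a := by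
    simp only [trm, ascPochhammer_succ_eval, ascPochhammer_zero, Polynomial.eval_one,
      Nat.factorial]
    push_cast
    rw [div_mul_eq_mul_div, div_eq_div_iff (mul_ne_zero (mul_ne_zero one_ne_zero h0) (by norm_num : (1:ℂ) ≠ 0)) hDel]
    rw [Del]; ring
  have e2 : trm a 2 = (3 / 16 : ℂ) * ((5 / 4 - Complex.I * (a:ℂ) / 2 + 2) * (5 / 4 - Complex.I * (a:ℂ) / 2 + 3) * (5 / 4 - Complex.I * (a:ℂ) / 2 + 4) * (5 / 4 - Complex.I * (a:ℂ) / 2 + 5) * (5 / 4 - Complex.I * (a:ℂ) / 2 + 6) * (5 / 4 - Complex.I * (a:ℂ) / 2 + 7)) / Del a := by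
    simp only [trm, ascPochhammer_succ_eval, ascPochhammer_zero, Polynomial.eval_one,
      Nat.factorial]
    push_cast
    rw [div_mul_eq_mul_div, div_eq_div_iff (mul_ne_zero (mul_ne_zero (mul_ne_zero one_ne_zero h0) h1) (by norm_num : (2:ℂ) ≠ 0)) hDel]
    rw [Del]; ring
  have e3 : trm a 3 = (15 / 64 : ℂ) * ((5 / 4 - Complex.I * (a:ℂ) / 2 + 3) * (5 / 4 - Complex.I * (a:ℂ) / 2 + 4) * (5 / 4 - Complex.I * (a:ℂ) / 2 + 5) * (5 / 4 - Complex.I * (a:ℂ) / 2 + 6) * (5 / 4 - Complex.I * (a:ℂ) / 2 + 7)) / Del a := by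
    simp only [trm, ascPochhammer_succ_eval, ascPochhammer_zero, Polynomial.eval_one,
      Nat.factorial]
    push_cast
    rw [div_mul_eq_mul_div, div_eq_div_iff (mul_ne_zero (mul_ne_zero (mul_ne_zero (mul_ne_zero one_ne_zero h0) h1) h2) (by norm_num : (6:ℂ) ≠ 0)) hDel]
    rw [Del]; ring
  have e4 : trm a 4 = (105 / 256 : ℂ) * ((5 / 4 - Complex.I * (a:ℂ) / 2 + 4) * (5 / 4 - Complex.I * (a:ℂ) / 2 + 5) * (5 / 4 - Complex.I * (a:ℂ) / 2 + 6) * (5 / 4 - Complex.I * (a:ℂ) / 2 + 7)) / Del a := by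
    simp only [trm, ascPochhammer_succ_eval, ascPochhammer_zero, Polynomial.eval_one,
      Nat.factorial]
    push_cast
    rw [div_mul_eq_mul_div, div_eq_div_iff (mul_ne_zero (mul_ne_zero (mul_ne_zero (mul_ne_zero (mul_ne_zero one_ne_zero h0) h1) h2) h3) (by norm_num : (24:ℂ) ≠ 0)) hDel]
    rw [Del]; ring
  have e5 : trm a 5 = (945 / 1024 : ℂ) * ((5 / 4 - Complex.I * (a:ℂ) / 2 + 5) * (5 / 4 - Complex.I * (a:ℂ) / 2 + 6) * (5 / 4 - Complex.I * (a:ℂ) / 2 + 7)) / Del a := by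
    simp only [trm, ascPochhammer_succ_eval, ascPochhammer_zero, Polynomial.eval_one,
      Nat.factorial]
    push_cast
    rw [div_mul_eq_mul_div, div_eq_div_iff (mul_ne_zero (mul_ne_zero (mul_ne_zero (mul_ne_zero (mul_ne_zero (mul_ne_zero one_ne_zero h0) h1) h2) h3) h4) (by norm_num : (120:ℂ) ≠ 0)) hDel]
    rw [Del]; ring
  have e6 : trm a 6 = (10395 / 4096 : ℂ) * ((5 / 4 - Complex.I * (a:ℂ) / 2 + 6) * (5 / 4 - Complex.I * (a:ℂ) / 2 + 7)) / Del a := by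
    simp only [trm, ascPochhammer_succ_eval, ascPochhammer_zero, Polynomial.eval_one,
      Nat.factorial]
    push_cast
    rw [div_mul_eq_mul_div, div_eq_div_iff (mul_ne_zero (mul_ne_zero (mul_ne_zero (mul_ne_zero (mul_ne_zero (mul_ne_zero (mul_ne_zero one_ne_zero h0) h1) h2) h3) h4) h5) (by norm_num : (720:ℂ) ≠ 0)) hDel]
    rw [Del]; ring
  have e7 : trm a 7 = (135135 / 16384 : ℂ) * ((5 / 4 - Complex.I * (a:ℂ) / 2 + 7)) / Del a := by
    simp only [trm, ascPochhammer_succ_eval, ascPochhammer_zero, Polynomial.eval_one,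
      Nat.factorial]
    push_cast
    rw [div_mul_eq_mul_div, div_eq_div_iff (mul_ne_zero (mul_ne_zero (mul_ne_zero (mul_ne_zero (mul_ne_zero (mul_ne_zero (mul_ne_zero (mul_ne_zero one_ne_zero h0) h1) h2) h3) h4) h5) h6) (by norm_num : (5040:ℂ) ≠ 0)) hDel]
    rw [Del]; ring
  have e8 : trm a 8 = (2027025 / 65536 : ℂ) * (1) / Del a := by
    simp only [trm, ascPochhammer_succ_eval, ascPochhammer_zero, Polynomial.eval_one,
      Nat.factorial]
    push_cast
    rw [div_mul_eq_mul_div, div_eq_div_iff (mul_ne_zero (mul_ne_zero (mul_ne_zero (mul_ne_zero (mul_ne_zero (mul_ne_zero (mul_ne_zero (mul_ne_zero (mul_ne_zero one_ne_zero h0) h1) h2) h3) h4) h5) h6) h7) (by norm_num : (40320:ℂ) ≠ 0)) hDel]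
    rw [Del]; ring
  have hS : (∑ n ∈ Finset.range 9, trm a n) = SM a / Del a := by
    rw [Finset.sum_range_succ, Finset.sum_range_succ, Finset.sum_range_succ,
      Finset.sum_range_succ, Finset.sum_range_succ, Finset.sum_range_succ, Finset.sum_range_succ,
      Finset.sum_range_succ, Finset.sum_range_succ, Finset.sum_range_zero,
      e0, e1, e2, e3, e4, e5, e6, e7, e8, SM]
    ring
  rw [hS, SM_eq, Q_eq, inv_mul_eq_div, div_div]


open Finset in
lemma pochC_prod (x : ℂ) (n : ℕ) :
    (ascPochhammer ℂ n).eval x = ∏ j ∈ Finset.range n, (x + j) := by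
  induction n with
  | zero => simp
  | succ n ih => rw [ascPochhammer_succ_eval, ih, Finset.prod_range_succ]

lemma norm_half_add (j : ℕ) : ‖((1:ℂ)/2 + j)‖ = 1/2 + (j:ℝ) := by
  rw [show ((1:ℂ)/2 + j) = (((1/2 + j : ℝ)):ℂ) by push_cast; ring, Complex.norm_real,
    Real.norm_eq_abs, abs_of_pos (by positivity)]

lemma re_le_normc (a : ℝ) (j : ℕ) :
    (1/2 + j : ℝ) ≤ ‖((5:ℂ)/4 - Complex.I * a / 2 + j)‖ := by
  have h : ((5:ℂ)/4 - Complex.I * a / 2 + j).re = 5/4 + (j:ℝ) := by simp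
  calc (1/2 + j : ℝ) ≤ 5/4 + (j:ℝ) := by linarith
    _ ≤ |((5:ℂ)/4 - Complex.I * a / 2 + j).re| := by rw [h]; exact le_abs_self _
    _ ≤ ‖((5:ℂ)/4 - Complex.I * a / 2 + j)‖ := by
        exact Complex.abs_re_le_norm _

lemma im_le_normc (a : ℝ) (ha : 0 < a) (j : ℕ) :
    a/2 ≤ ‖((5:ℂ)/4 - Complex.I * a / 2 + j)‖ := by
  have h : ((5:ℂ)/4 - Complex.I * a / 2 + j).im = -(a/2) := by simp
  calc a/2 = |((5:ℂ)/4 - Complex.I * a / 2 + j).im| := by rw [h, abs_neg, abs_of_pos (by positivity)]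
    _ ≤ ‖((5:ℂ)/4 - Complex.I * a / 2 + j)‖ := by
        exact Complex.abs_im_le_norm _

set_option maxHeartbeats 800000 in
lemma norm_trm_le (a : ℝ) (n : ℕ) : ‖trm a n‖ ≤ (1/2 : ℝ)^n := by
  rw [trm, norm_mul, norm_pow]
  have h12 : ‖((1:ℂ)/2)‖ = (1/2 : ℝ) := by norm_num
  rw [h12]
  refine mul_le_of_le_one_left (by positivity) ?_
  rw [norm_div, norm_mul, norm_mul, ascPochhammer_eval_one, RCLike.norm_natCast,
    pochC_prod, pochC_prod, norm_prod, norm_prod]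
  refine div_le_one_of_le₀ ?_ (mul_nonneg (Finset.prod_nonneg fun j _ => norm_nonneg _) (Nat.cast_nonneg _))
  have key : (∏ j ∈ Finset.range n, ‖((1:ℂ)/2 + j)‖) ≤
      ∏ j ∈ Finset.range n, ‖((5:ℂ)/4 - Complex.I * a / 2 + j)‖ := by
    refine Finset.prod_le_prod (fun j _ => norm_nonneg _) (fun j _ => ?_)
    rw [norm_half_add]
    exact re_le_normc a j
  have hm : (0:ℝ) ≤ (n.factorial : ℝ) := Nat.cast_nonneg _
  calc (∏ j ∈ Finset.range n, ‖((1:ℂ)/2 + j)‖) * (n.factorial : ℝ)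
      ≤ (∏ j ∈ Finset.range n, ‖((5:ℂ)/4 - Complex.I * a / 2 + j)‖) * (n.factorial : ℝ) :=
        mul_le_mul_of_nonneg_right key hm
    _ = _ := rfl

lemma summable_trm (a : ℝ) : Summable (trm a) :=
  Summable.of_norm_bounded summable_geometric_two (norm_trm_le a)

set_option maxHeartbeats 800000 in
lemma norm_trm_tail (a : ℝ) (ha : 0 < a) (n : ℕ) :
    ‖trm a (n + 9)‖ ≤ 34459425 / a ^ 9 * (1/2 : ℝ)^(n + 9) := by
  rw [trm, norm_mul, norm_pow]
  have h12 : ‖((1:ℂ)/2)‖ = (1/2 : ℝ) := by norm_num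
  rw [h12]
  refine mul_le_mul_of_nonneg_right ?_ (by positivity)
  rw [norm_div, norm_mul, norm_mul, ascPochhammer_eval_one, RCLike.norm_natCast,
    pochC_prod, pochC_prod, norm_prod, norm_prod]
  have hfpos : (0:ℝ) < ((n+9).factorial : ℝ) := by
    exact_mod_cast Nat.factorial_pos _
  rw [mul_div_mul_right _ _ (ne_of_gt hfpos)]
  -- numerator
  have hA : (∏ j ∈ Finset.range (n+9), ‖((1:ℂ)/2 + j)‖) =
      ∏ j ∈ Finset.range (n+9), (1/2 + (j:ℝ)) :=
    Finset.prod_congr rfl (fun j _ => norm_half_add j)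
  rw [hA, show n + 9 = 9 + n from add_comm n 9, Finset.prod_range_add, Finset.prod_range_add]
  have hA9 : (∏ j ∈ Finset.range 9, (1/2 + (j:ℝ))) = 34459425/512 := by
    simp [Finset.prod_range_succ]
    norm_num
  rw [hA9]
  set R : ℝ := ∏ j ∈ Finset.range n, (1/2 + ((9 + j : ℕ):ℝ)) with hR
  have hRpos : 0 < R := by
    rw [hR]; exact Finset.prod_pos (fun j _ => by positivity)
  have hD9 : (a/2)^9 ≤ ∏ j ∈ Finset.range 9, ‖((5:ℂ)/4 - Complex.I * a / 2 + j)‖ := by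
    calc (a/2)^9 = ∏ _j ∈ Finset.range 9, (a/2) := by
          rw [Finset.prod_const, Finset.card_range]
      _ ≤ _ := Finset.prod_le_prod (fun j _ => by positivity) (fun j _ => im_le_normc a ha j)
  have hDR : R ≤ ∏ j ∈ Finset.range n, ‖((5:ℂ)/4 - Complex.I * a / 2 + (9 + j : ℕ))‖ := by
    rw [hR]
    exact Finset.prod_le_prod (fun j _ => by positivity) (fun j _ => re_le_normc a (9 + j))
  have hDpos : 0 < (∏ j ∈ Finset.range 9, ‖((5:ℂ)/4 - Complex.I * a / 2 + j)‖) *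
      ∏ j ∈ Finset.range n, ‖((5:ℂ)/4 - Complex.I * a / 2 + (9 + j : ℕ))‖ := by
    have h1 : 0 < (a/2)^9 := by positivity
    have := lt_of_lt_of_le h1 hD9
    exact mul_pos this (lt_of_lt_of_le hRpos hDR)
  rw [div_le_div_iff₀ hDpos (by positivity)]
  calc 34459425/512 * R * a^9 = 34459425 * ((a/2)^9 * R) := by ring
    _ ≤ 34459425 * ((∏ j ∈ Finset.range 9, ‖((5:ℂ)/4 - Complex.I * a / 2 + j)‖) *
        ∏ j ∈ Finset.range n, ‖((5:ℂ)/4 - Complex.I * a / 2 + (9 + j : ℕ))‖) := by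
        refine mul_le_mul_of_nonneg_left ?_ (by norm_num)
        exact mul_le_mul hD9 hDR (le_of_lt hRpos) (Finset.prod_nonneg fun j _ => norm_nonneg _)
    _ = _ := by ring

lemma tail_bound (a : ℝ) (ha : 0 < a) :
    ‖∑' n : ℕ, trm a (n + 9)‖ ≤ 134608 / a ^ 9 := by
  have hgeo : Summable (fun n : ℕ => (34459425 / a^9 * (1/2:ℝ)^9) * (1/2:ℝ)^n) :=
    summable_geometric_two.mul_left _
  have hbnd : ∀ n : ℕ, ‖trm a (n+9)‖ ≤ (34459425 / a^9 * (1/2:ℝ)^9) * (1/2:ℝ)^n :=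
    fun n => (norm_trm_tail a ha n).trans_eq (by rw [pow_add]; ring)
  have hnorm : Summable (fun n : ℕ => ‖trm a (n+9)‖) :=
    Summable.of_nonneg_of_le (fun _ => norm_nonneg _) hbnd hgeo
  calc ‖∑' n : ℕ, trm a (n + 9)‖ ≤ ∑' n : ℕ, ‖trm a (n+9)‖ := norm_tsum_le_tsum_norm hnorm
    _ ≤ ∑' n : ℕ, (34459425 / a^9 * (1/2:ℝ)^9) * (1/2:ℝ)^n := Summable.tsum_le_tsum hbnd hnorm hgeo
    _ = (34459425 / a^9 * (1/2:ℝ)^9) * 2 := by rw [tsum_mul_left, tsum_geometric_two]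
    _ = (34459425/256) / a^9 := by ring
    _ ≤ 134608 / a^9 := by gcongr <;> norm_num


noncomputable def nn (a : ℝ) : ℝ :=
  5473/32768*a^16 - 5569284955/2097152*a^14 + 10265488746023/4194304*a^12
    - 6445953302585995/16777216*a^10 + 204583643585698619/8388608*a^8
    - 165421817652495052355/536870912*a^6 - 1357134190747757151759/1073741824*a^4
    - 7585224889796870402925/2147483648*a^2 - 3470298699914468296875/4294967296

lemma nn_key (a : ℝ) :
    (pim a * qr a - pr a * qi a) * (16*a^7) - (qr a^2 + qi a^2) * (8*a^6+4*a^4+14*a^2+139)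
      = nn a := by
  simp only [pr, pim, qr, qi, nn]; ring

lemma nn_abs (a : ℝ) (ha : 1 ≤ a) : |nn a| ≤ 6000000000000 * a^16 := by
  have h0 : (1:ℝ) ≤ a^16 := one_le_pow₀ ha
  have h2 : a^2 ≤ a^16 := pow_le_pow_right₀ ha (by norm_num)
  have h4 : a^4 ≤ a^16 := pow_le_pow_right₀ ha (by norm_num)
  have h6 : a^6 ≤ a^16 := pow_le_pow_right₀ ha (by norm_num)
  have h8 : a^8 ≤ a^16 := pow_le_pow_right₀ ha (by norm_num)
  have h10 : a^10 ≤ a^16 := pow_le_pow_right₀ ha (by norm_num)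
  have h12 : a^12 ≤ a^16 := pow_le_pow_right₀ ha (by norm_num)
  have h14 : a^14 ≤ a^16 := pow_le_pow_right₀ ha (by norm_num)
  have ha0 : (0:ℝ) < a := lt_of_lt_of_le one_pos ha
  have n2 : (0:ℝ) ≤ a^2 := by positivity
  have n4 : (0:ℝ) ≤ a^4 := by positivity
  have n6 : (0:ℝ) ≤ a^6 := by positivity
  have n8 : (0:ℝ) ≤ a^8 := by positivity
  have n10 : (0:ℝ) ≤ a^10 := by positivity
  have n12 : (0:ℝ) ≤ a^12 := by positivity
  have n14 : (0:ℝ) ≤ a^14 := by positivity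
  rw [nn, abs_le]
  constructor <;> nlinarith

lemma Dlb (a : ℝ) (ha : 1 ≤ a) : a^18/16384 ≤ qr a^2 + qi a^2 := by
  have ha0 : (0:ℝ) < a := lt_of_lt_of_le one_pos ha
  have h1 : qr a^2 + qi a^2 = Complex.normSq ((qr a : ℂ) + qi a * Complex.I) := by
    rw [Complex.normSq_add_mul_I]
  have hk : ∀ z : ℂ, z.im = -(a/2) → (a/2)^2 ≤ Complex.normSq z := by
    intro z hz
    rw [Complex.normSq_apply, hz]
    nlinarith [mul_self_nonneg z.re]
  have hw2 : 4*a^2 ≤ Complex.normSq (1 - 2*Complex.I*(a:ℂ)) := by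
    rw [Complex.normSq_apply]
    simp
    nlinarith
  rw [h1, Q_eq, Del, Complex.normSq_mul, Complex.normSq_mul, Complex.normSq_mul,
    Complex.normSq_mul, Complex.normSq_mul, Complex.normSq_mul, Complex.normSq_mul,
    Complex.normSq_mul]
  calc a^18/16384
      = (a/2)^2*(a/2)^2*(a/2)^2*(a/2)^2*(a/2)^2*(a/2)^2*(a/2)^2*(a/2)^2*(4*a^2) := by ring
    _ ≤ _ := by
        have hq : ∀ k : ℂ, k.im = 0 → (a/2)^2 ≤ Complex.normSq (5 / 4 - Complex.I * (a:ℂ) / 2 + k) := by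
          intro k hkim
          exact hk _ (by simp [hkim])
        have hnn : (0:ℝ) ≤ (a/2)^2 := by positivity
        gcongr ?_ * ?_ * ?_ * ?_ * ?_ * ?_ * ?_ * ?_ * ?_ <;>
          first
            | exact hw2
            | exact hq _ (by norm_num)
            | exact hnn
            | (repeat' first
                | apply mul_nonneg
                | exact Complex.normSq_nonneg _
                | positivity)


/-- As `a → ∞`, `Y(a) = Im{(1-2ia)⁻¹ F(1/2,1;5/4-ia/2;1/2)}` has the asymptotic
expansion `Y(a) ~ 1/(2a) + 1/(4a³) + 7/(8a⁵) + 139/(16a⁷) + ⋯`;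
in particular `Y(a) = 1/(2a) + O(a⁻³)`. -/
theorem stmt10 (Y : ℝ → ℝ)
    (hY : ∀ a : ℝ, Y a = ((1 - 2 * Complex.I * a)⁻¹ *
        hypF (1 / 2) 1 (5 / 4 - Complex.I * a / 2) (1 / 2)).im) :
    ((fun a : ℝ => Y a - (1 / (2 * a) + 1 / (4 * a ^ 3) + 7 / (8 * a ^ 5) +
        139 / (16 * a ^ 7))) =O[atTop] fun a : ℝ => 1 / a ^ 9) ∧
    ((fun a : ℝ => Y a - 1 / (2 * a)) =O[atTop] fun a : ℝ => 1 / a ^ 3) := by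
  have key : ∀ a : ℝ, 1 ≤ a → |Y a - (1 / (2 * a) + 1 / (4 * a ^ 3) + 7 / (8 * a ^ 5) +
      139 / (16 * a ^ 7))| ≤ 10000000000000000 / a ^ 9 := by
    intro a ha1
    have ha0 : (0:ℝ) < a := lt_of_lt_of_le one_pos ha1
    have hDpos : (0:ℝ) < qr a^2 + qi a^2 := lt_of_lt_of_le (by positivity) (Dlb a ha1)
    have hsum : (∑ i ∈ Finset.range 9, trm a i) + ∑' i : ℕ, trm a (i+9) = ∑' i : ℕ, trm a i :=
      Summable.sum_add_tsum_nat_add 9 (summable_trm a)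
    have hY1 : Y a = ((1 - 2*Complex.I*a)⁻¹ * (∑ n ∈ Finset.range 9, trm a n)).im +
        ((1 - 2*Complex.I*a)⁻¹ * (∑' n : ℕ, trm a (n+9))).im := by
      rw [hY a]
      have hh : hypF (1/2) 1 (5/4 - Complex.I*a/2) (1/2) = ∑' n : ℕ, trm a n := rfl
      rw [hh, ← hsum, mul_add, Complex.add_im]
    have him1 : ((1 - 2*Complex.I*a)⁻¹ * (∑ n ∈ Finset.range 9, trm a n)).im
        = (pim a * qr a - pr a * qi a) / (qr a^2 + qi a^2) := by
      rw [sum9 a ha0, Complex.div_im, Complex.normSq_add_mul_I]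
      simp only [Complex.add_re, Complex.add_im, Complex.mul_re, Complex.mul_im,
        Complex.I_re, Complex.I_im, Complex.ofReal_re, Complex.ofReal_im]
      ring
    have htail : |((1 - 2*Complex.I*a)⁻¹ * (∑' n : ℕ, trm a (n+9))).im| ≤ 134608 / a^9 := by
      have hwn : (1:ℝ) ≤ ‖1 - 2*Complex.I*(a:ℂ)‖ := by
        have him : (1 - 2*Complex.I*(a:ℂ)).im = -(2*a) := by simp
        calc (1:ℝ) ≤ 2*a := by linarith
          _ = |(1 - 2*Complex.I*(a:ℂ)).im| := by rw [him, abs_neg, abs_of_pos (by linarith)]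
          _ ≤ ‖(1 - 2*Complex.I*(a:ℂ))‖ := by
              exact Complex.abs_im_le_norm _
      calc |((1 - 2*Complex.I*a)⁻¹ * (∑' n : ℕ, trm a (n+9))).im|
          ≤ ‖(1 - 2*Complex.I*(a:ℂ))⁻¹ * (∑' n : ℕ, trm a (n+9))‖ := by
            exact Complex.abs_im_le_norm _
        _ = ‖(1 - 2*Complex.I*(a:ℂ))⁻¹‖ * ‖∑' n : ℕ, trm a (n+9)‖ := norm_mul _ _
        _ ≤ 1 * (134608/a^9) := by
            refine mul_le_mul ?_ (tail_bound a ha0) (norm_nonneg _) one_pos.le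
            rw [norm_inv]
            exact inv_le_one_of_one_le₀ hwn
        _ = 134608/a^9 := one_mul _
    have hT : (1:ℝ)/(2*a) + 1/(4*a^3) + 7/(8*a^5) + 139/(16*a^7)
        = (8*a^6+4*a^4+14*a^2+139)/(16*a^7) := by
      field_simp
      ring
    have hE : (0:ℝ) < 16*a^7 := by positivity
    have harr : (pim a * qr a - pr a * qi a) / (qr a^2 + qi a^2)
        - (8*a^6+4*a^4+14*a^2+139)/(16*a^7)
        = nn a / ((qr a^2 + qi a^2) * (16*a^7)) := by
      rw [div_sub_div _ _ (ne_of_gt hDpos) (ne_of_gt hE), nn_key]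
    have h5 : |nn a / ((qr a^2 + qi a^2) * (16*a^7))| ≤ 6144000000000000/a^9 := by
      rw [abs_div, abs_of_pos (mul_pos hDpos hE)]
      have hden : a^25/1024 ≤ (qr a^2 + qi a^2)*(16*a^7) := by
        calc a^25/1024 = (a^18/16384)*(16*a^7) := by ring
          _ ≤ _ := mul_le_mul_of_nonneg_right (Dlb a ha1) (le_of_lt hE)
      calc |nn a| / ((qr a^2 + qi a^2)*(16*a^7))
          ≤ (6000000000000*a^16) / (a^25/1024) :=
            div_le_div₀ (by positivity) (nn_abs a ha1) (by positivity) hden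
        _ = 6144000000000000/a^9 := by
            rw [div_eq_div_iff (by positivity) (by positivity)]; ring
    have hfin : Y a - (1 / (2 * a) + 1 / (4 * a ^ 3) + 7 / (8 * a ^ 5) + 139 / (16 * a ^ 7))
        = nn a / ((qr a^2 + qi a^2) * (16*a^7)) +
          ((1 - 2*Complex.I*a)⁻¹ * (∑' n : ℕ, trm a (n+9))).im := by
      rw [hY1, him1, hT, ← harr]
      ring
    calc |Y a - (1 / (2 * a) + 1 / (4 * a ^ 3) + 7 / (8 * a ^ 5) + 139 / (16 * a ^ 7))|
        ≤ |nn a / ((qr a^2 + qi a^2) * (16*a^7))| +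
          |((1 - 2*Complex.I*a)⁻¹ * (∑' n : ℕ, trm a (n+9))).im| := by
          rw [hfin]; exact abs_add_le _ _
      _ ≤ 6144000000000000/a^9 + 134608/a^9 := add_le_add h5 htail
      _ ≤ 10000000000000000 / a ^ 9 := by
          rw [← add_div]
          gcongr
          norm_num
  constructor
  · rw [isBigO_iff]
    refine ⟨10000000000000000, ?_⟩
    filter_upwards [eventually_ge_atTop (1:ℝ)] with a ha
    rw [Real.norm_eq_abs, Real.norm_eq_abs]
    have h1 : |1 / a^9| = 1/a^9 := abs_of_pos (by positivity)
    calc |Y a - _| ≤ 10000000000000000 / a ^ 9 := key a ha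
      _ = 10000000000000000 * |1/a^9| := by rw [h1]; ring
  · rw [isBigO_iff]
    refine ⟨10000000000000016, ?_⟩
    filter_upwards [eventually_ge_atTop (1:ℝ)] with a ha
    have ha0 : (0:ℝ) < a := lt_of_lt_of_le one_pos ha
    rw [Real.norm_eq_abs, Real.norm_eq_abs]
    have h39 : a^3 ≤ a^9 := pow_le_pow_right₀ ha (by norm_num)
    have h35 : a^3 ≤ a^5 := pow_le_pow_right₀ ha (by norm_num)
    have h37 : a^3 ≤ a^7 := pow_le_pow_right₀ ha (by norm_num)
    have e1 : 10000000000000000/a^9 ≤ 10000000000000000/a^3 :=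
      div_le_div_of_nonneg_left (by norm_num) (by positivity) h39
    have e2 : (1:ℝ)/(4*a^3) ≤ 1/a^3 := by
      rw [div_le_div_iff₀ (by positivity) (by positivity)]
      nlinarith [pow_nonneg ha0.le 3]
    have e3 : (7:ℝ)/(8*a^5) ≤ 1/a^3 := by
      rw [div_le_div_iff₀ (by positivity) (by positivity)]
      nlinarith [h35, pow_nonneg ha0.le 5, pow_nonneg ha0.le 3]
    have e4 : (139:ℝ)/(16*a^7) ≤ 9/a^3 := by
      rw [div_le_div_iff₀ (by positivity) (by positivity)]
      nlinarith [h37, pow_nonneg ha0.le 7, pow_nonneg ha0.le 3]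
    have habs : |1/a^3| = 1/a^3 := abs_of_pos (by positivity)
    calc |Y a - 1/(2*a)|
        = |(Y a - (1 / (2 * a) + 1 / (4 * a ^ 3) + 7 / (8 * a ^ 5) + 139 / (16 * a ^ 7)))
            + (1 / (4 * a ^ 3) + 7 / (8 * a ^ 5) + 139 / (16 * a ^ 7))| := by ring_nf
      _ ≤ |Y a - (1 / (2 * a) + 1 / (4 * a ^ 3) + 7 / (8 * a ^ 5) + 139 / (16 * a ^ 7))|
            + |1 / (4 * a ^ 3) + 7 / (8 * a ^ 5) + 139 / (16 * a ^ 7)| := abs_add_le _ _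
      _ ≤ 10000000000000000/a^9 + (1 / (4 * a ^ 3) + 7 / (8 * a ^ 5) + 139 / (16 * a ^ 7)) := by
          refine add_le_add (key a ha) (le_of_eq (abs_of_pos (by positivity)))
      _ ≤ 10000000000000000/a^3 + (1/a^3 + 1/a^3 + 9/a^3) := by
          refine add_le_add e1 (add_le_add (add_le_add e2 e3) e4)
      _ = 10000000000000011 * (1/a^3) := by ring
      _ ≤ 10000000000000016 * |1/a^3| := by rw [habs]; gcongr; norm_num
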